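/- Let u : 𝕋 → ℝ be continuous on 𝕋 ∖ {1} with one-sided limits u⁺(1) := lim_{t→0⁺} u(e^{it}) and u⁻(1) := lim_{t→0⁻} u(e^{it}), and suppose 0 < u⁻(1) < u⁺(1). Then lim_{r→1⁻} (1/2π) ∫_𝕋 Re((e^{it}+r)/(e^{it}−r)) u(e^{it}) dt exists and lies in the interval [u⁻(1), u⁺(1)]. -/

import Mathlib

open Set Filter Real MeasureTheory intervalIntegral
open scoped Interval

set_option maxHeartbeats 1000000

noncomputable def Pk (r t : ℝ) : ℝ := (1 - r^2) / (1 - 2*r*Real.cos t + r^2)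
noncomputable def Fk (r t : ℝ) : ℝ :=
  t + 2 * Real.arctan (r * Real.sin t / (1 - r * Real.cos t))

lemma denom_pos {r : ℝ} (hr0 : 0 < r) (hr1 : r < 1) (t : ℝ) :
    0 < 1 - 2*r*Real.cos t + r^2 := by
  nlinarith [Real.cos_le_one t]

lemma denom2_pos {r : ℝ} (hr0 : 0 < r) (hr1 : r < 1) (t : ℝ) :
    0 < 1 - r * Real.cos t := by nlinarith [Real.cos_le_one t]

lemma Pk_nonneg {r : ℝ} (hr0 : 0 < r) (hr1 : r < 1) (t : ℝ) : 0 ≤ Pk r t :=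
  div_nonneg (by nlinarith) (denom_pos hr0 hr1 t).le

lemma Pk_cont {r : ℝ} (hr0 : 0 < r) (hr1 : r < 1) : Continuous (Pk r) :=
  Continuous.div continuous_const (by continuity) fun t => (denom_pos hr0 hr1 t).ne'

lemma hasDerivAt_Fk {r : ℝ} (hr0 : 0 < r) (hr1 : r < 1) (t : ℝ) :
    HasDerivAt (Fk r) (Pk r t) t := by
  have hden := denom2_pos hr0 hr1 t
  have h1 : HasDerivAt (fun t => r * Real.sin t) (r * Real.cos t) t :=
    (Real.hasDerivAt_sin t).const_mul r
  have h2 : HasDerivAt (fun t => 1 - r * Real.cos t) (r * Real.sin t) t := by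
    simpa using ((Real.hasDerivAt_cos t).const_mul r).const_sub 1
  have h3 := h1.div h2 hden.ne'
  have h4 := (Real.hasDerivAt_arctan (r * Real.sin t / (1 - r * Real.cos t))).comp t h3
  have h6 : HasDerivAt (Fk r)
      (1 + 2 * ((1 / (1 + (r * Real.sin t / (1 - r * Real.cos t))^2)) *
        ((r * Real.cos t * (1 - r * Real.cos t) - r * Real.sin t * (r * Real.sin t)) /
          (1 - r * Real.cos t)^2))) t := by
    unfold Fk
    exact (hasDerivAt_id t).add ((h4.const_mul 2))
  convert h6 using 1
  have hs := Real.sin_sq_add_cos_sq t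
  have hd := denom_pos hr0 hr1 t
  field_simp [Pk]
  rw [Pk]
  field_simp
  rw [div_eq_iff (by nlinarith [hd])]
  linear_combination r^2*(2-2*r*Real.cos t)*hs

lemma integral_Pk {r : ℝ} (hr0 : 0 < r) (hr1 : r < 1) (a b : ℝ) :
    ∫ t in a..b, Pk r t = Fk r b - Fk r a :=
  intervalIntegral.integral_eq_sub_of_hasDerivAt (fun t _ => hasDerivAt_Fk hr0 hr1 t)
    ((Pk_cont hr0 hr1).intervalIntegrable a b)

lemma re_eq {r : ℝ} (hr0 : 0 < r) (hr1 : r < 1) (t : ℝ) :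
    ((Complex.exp (t * Complex.I) + (r:ℂ)) / (Complex.exp (t * Complex.I) - (r:ℂ))).re
      = Pk r t := by
  have h1 : (Complex.exp (t * Complex.I)).re = Real.cos t := Complex.exp_ofReal_mul_I_re t
  have h2 : (Complex.exp (t * Complex.I)).im = Real.sin t := Complex.exp_ofReal_mul_I_im t
  rw [Complex.div_re]
  simp only [Complex.add_re, Complex.add_im, Complex.sub_re, Complex.sub_im,
    Complex.ofReal_re, Complex.ofReal_im, h1, h2, Complex.normSq_apply]
  have hs := Real.sin_sq_add_cos_sq t
  rw [Pk, ← add_div]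
  congr 1
  · linear_combination hs
  · linear_combination hs

lemma Fk_zero {r : ℝ} : Fk r 0 = 0 := by simp [Fk]
lemma Fk_pi {r : ℝ} : Fk r π = π := by simp [Fk]
lemma Fk_two_pi {r : ℝ} : Fk r (2*π) = 2*π := by
  simp [Fk, Real.sin_two_pi, Real.cos_two_pi]

-- Pointwise kernel bound away from 0
lemma Pk_le {r δ t : ℝ} (hr0 : 0 < r) (hr1 : r < 1) (hct : Real.cos t ≤ Real.cos δ) :
    Pk r t ≤ (1 - r^2) / (1 - 2*r*Real.cos δ + r^2) := by
  apply div_le_div_of_nonneg_left (by nlinarith) (denom_pos hr0 hr1 δ) (by nlinarith)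


theorem stmt_11 (u : ℝ → ℝ) (hper : Function.Periodic u (2 * π))
    -- `u` continuous on the circle off the point `1` :
    (hcont : ContinuousOn u (Set.Ioo 0 (2 * π)))
    (up um : ℝ)
    -- one-sided limits at the point `1` of the circle :
    (hup : Tendsto u (nhdsWithin 0 (Set.Ioi 0)) (nhds up))
    (hum : Tendsto u (nhdsWithin (2 * π) (Set.Iio (2 * π))) (nhds um))
    (hum0 : 0 < um) (humup : um < up) :
    ∃ L ∈ Set.Icc um up,
      Tendsto (fun r : ℝ => (2 * π)⁻¹ *
          ∫ t in (0:ℝ)..(2 * π),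
            ((Complex.exp (t * Complex.I) + (r:ℂ)) /
              (Complex.exp (t * Complex.I) - (r:ℂ))).re * u t)
        (nhdsWithin 1 (Set.Iio 1)) (nhds L) := by
  have hπ := Real.pi_pos
  refine ⟨(um + up)/2, ⟨by linarith, by linarith⟩, ?_⟩
  -- one-sided limit extraction
  have Hup : ∀ e, 0 < e → ∃ δ, 0 < δ ∧ ∀ t, 0 < t → t < δ → |u t - up| ≤ e := by
    intro e he
    rcases Metric.tendsto_nhdsWithin_nhds.mp hup e he with ⟨δ, hδ, h⟩
    refine ⟨δ, hδ, fun t ht htδ => ?_⟩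
    have := h (mem_Ioi.2 ht) (by simpa [Real.dist_eq, abs_of_pos ht] using htδ)
    rw [Real.dist_eq] at this; exact this.le
  have Hum : ∀ e, 0 < e → ∃ δ, 0 < δ ∧ ∀ t, 2*π - δ < t → t < 2*π → |u t - um| ≤ e := by
    intro e he
    rcases Metric.tendsto_nhdsWithin_nhds.mp hum e he with ⟨δ, hδ, h⟩
    refine ⟨δ, hδ, fun t ht ht2 => ?_⟩
    have := h (mem_Iio.2 ht2) (by rw [Real.dist_eq, abs_of_neg (by linarith)]; linarith)
    rw [Real.dist_eq] at this; exact this.le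
  -- global bound for u on (0, 2π)
  obtain ⟨δa, hδa0, ha⟩ := Hup 1 one_pos
  obtain ⟨δb, hδb0, hb⟩ := Hum 1 one_pos
  set a0 : ℝ := min δa π / 2 with ha0
  set b0 : ℝ := min δb π / 2 with hb0
  have ha0p : 0 < a0 := by positivity
  have hb0p : 0 < b0 := by positivity
  have ha0δ : a0 < δa := by
    have : min δa π ≤ δa := min_le_left _ _
    have : a0 ≤ δa / 2 := by rw [ha0]; linarith
    linarith
  have hb0δ : b0 < δb := by
    have : min δb π ≤ δb := min_le_left _ _
    have : b0 ≤ δb / 2 := by rw [hb0]; linarith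
    linarith
  have ha0π : a0 ≤ π / 2 := by
    have : min δa π ≤ π := min_le_right _ _
    rw [ha0]; linarith
  have hb0π : b0 ≤ π / 2 := by
    have : min δb π ≤ π := min_le_right _ _
    rw [hb0]; linarith
  obtain ⟨M, hM⟩ : ∃ M, ∀ t ∈ Icc a0 (2*π - b0), ‖u t‖ ≤ M :=
    isCompact_Icc.exists_bound_of_continuousOn
      (hcont.mono (fun t ht => ⟨lt_of_lt_of_le ha0p ht.1, lt_of_le_of_lt ht.2 (by linarith)⟩))
  set B : ℝ := max M (max (|up| + 1) (|um| + 1)) with hBdef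
  have hB : ∀ t ∈ Ioo 0 (2*π), |u t| ≤ B := by
    intro t ht
    rcases lt_or_ge t a0 with h | h
    · have h1 := ha t ht.1 (h.trans ha0δ)
      have : |u t| ≤ |up| + 1 := by
        have := abs_sub_abs_le_abs_sub (u t) up
        linarith
      exact this.trans ((le_max_left _ _).trans (le_max_right _ _))
    rcases le_or_gt t (2*π - b0) with h2 | h2
    · exact (hM t ⟨h, h2⟩).trans (le_max_left _ _)
    · have h1 := hb t (by linarith) ht.2
      have : |u t| ≤ |um| + 1 := by
        have := abs_sub_abs_le_abs_sub (u t) um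
        linarith
      exact this.trans ((le_max_right _ _).trans (le_max_right _ _))
  have hB0 : 0 ≤ B := le_trans (by positivity) ((le_max_left _ _).trans (le_max_right _ _))
  -- integrability of u
  have hIu : IntegrableOn u (Ioo 0 (2*π)) volume := by
    refine Integrable.mono' (g := fun _ => B) (integrableOn_const measure_Ioo_lt_top.ne enorm_ne_top)
      (hcont.aestronglyMeasurable measurableSet_Ioo) ?_
    rw [ae_restrict_iff' measurableSet_Ioo]
    exact ae_of_all _ fun t ht => by simpa [Real.norm_eq_abs] using hB t ht
  have hIcc : IntegrableOn u (Icc 0 (2*π)) volume := by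
    unfold IntegrableOn
    rw [Measure.restrict_congr_set Ioo_ae_eq_Icc.symm]
    exact hIu
  have hII : ∀ c d : ℝ, 0 ≤ c → c ≤ 2*π → 0 ≤ d → d ≤ 2*π → IntervalIntegrable u volume c d := by
    intro c d hc hc2 hd hd2
    exact (hIcc.mono_set (fun x hx => by
      rcases mem_uIcc.1 hx with ⟨h1, h2⟩ | ⟨h1, h2⟩ <;> exact ⟨by linarith, by linarith⟩)).intervalIntegrable

  rw [Metric.tendsto_nhds]
  intro ε hε
  obtain ⟨δ₁, hδ₁0, h1⟩ := Hup (ε/2) (by positivity)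
  obtain ⟨δ₂, hδ₂0, h2⟩ := Hum (ε/2) (by positivity)
  set δ : ℝ := min (min δ₁ δ₂) π / 2 with hδdef
  have hδ0 : 0 < δ := by positivity
  have hδ1 : δ < δ₁ := by
    have h := le_trans (min_le_left (min δ₁ δ₂) π) (min_le_left δ₁ δ₂)
    rw [hδdef]; linarith
  have hδ2 : δ < δ₂ := by
    have h := le_trans (min_le_left (min δ₁ δ₂) π) (min_le_right δ₁ δ₂)
    rw [hδdef]; linarith
  have hδπ : δ ≤ π / 2 := by
    have h := min_le_right (min δ₁ δ₂) π
    rw [hδdef]; linarith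
  have hcos : ∀ t, δ ≤ t → t ≤ 2*π - δ → Real.cos t ≤ Real.cos δ := by
    intro t h1t h2t
    rcases le_or_gt t π with h | h
    · exact Real.cos_le_cos_of_nonneg_of_le_pi hδ0.le h h1t
    · have h3 := Real.cos_le_cos_of_nonneg_of_le_pi hδ0.le
        (show 2*π - t ≤ π by linarith) (show δ ≤ 2*π - t by linarith)
      rwa [Real.cos_two_pi_sub] at h3
  set C : ℝ := B + |up| + |um| with hC
  have hC0 : 0 ≤ C := by positivity
  have hKlim : Tendsto (fun r : ℝ => (1 - r^2)/(1 - 2*r*Real.cos δ + r^2) * (C * (2*π)))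
      (nhdsWithin 1 (Iio 1)) (nhds 0) := by
    have hcosδ : Real.cos δ < 1 := by
      have h := Real.cos_lt_cos_of_nonneg_of_le_pi (le_refl 0) (by linarith : δ ≤ π) hδ0
      simpa using h
    have hnum : Tendsto (fun r : ℝ => 1 - r^2) (nhds 1) (nhds 0) := by
      have hc : Continuous fun r : ℝ => 1 - r^2 := by fun_prop
      have h := hc.tendsto 1
      norm_num at h
      exact h
    have hden : Tendsto (fun r : ℝ => 1 - 2*r*Real.cos δ + r^2) (nhds 1)
        (nhds (1 - 2*Real.cos δ + 1)) := by
      have hc : Continuous fun r : ℝ => 1 - 2*r*Real.cos δ + r^2 := by fun_prop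
      have h := hc.tendsto 1
      norm_num at h ⊢
      convert h using 2 <;> ring
    have hdiv : Tendsto (fun r : ℝ => (1 - r^2)/(1 - 2*r*Real.cos δ + r^2)) (nhds 1) (nhds 0) := by
      have h := hnum.div hden (by nlinarith)
      rw [zero_div] at h
      exact h
    simpa using (hdiv.mul_const (C * (2*π))).mono_left nhdsWithin_le_nhds
  have hsmall := hKlim.eventually_lt_const (show (0:ℝ) < ε * π / 2 by positivity)
  have hev : Ioo (0:ℝ) 1 ∈ nhdsWithin 1 (Iio 1) :=
    Ioo_mem_nhdsLT zero_lt_one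
  filter_upwards [hev, hsmall] with r hr hsm
  obtain ⟨hr0, hr1⟩ := hr
  set Kr : ℝ := (1 - r^2)/(1 - 2*r*Real.cos δ + r^2) with hKrdef
  have hKr0 : 0 ≤ Kr := div_nonneg (by nlinarith) (denom_pos hr0 hr1 δ).le
  have hPuI : ∀ c d : ℝ, 0 ≤ c → c ≤ 2*π → 0 ≤ d → d ≤ 2*π →
      IntervalIntegrable (fun t => Pk r t * u t) volume c d := fun c d h1 h2' h3 h4 =>
    IntervalIntegrable.continuousOn_mul (hII c d h1 h2' h3 h4) (Pk_cont hr0 hr1).continuousOn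
  have hPdI : ∀ (v c d : ℝ), 0 ≤ c → c ≤ 2*π → 0 ≤ d → d ≤ 2*π →
      IntervalIntegrable (fun t => Pk r t * (u t - v)) volume c d := fun v c d h1 h2' h3 h4 =>
    IntervalIntegrable.continuousOn_mul ((hII c d h1 h2' h3 h4).sub intervalIntegrable_const)
      (Pk_cont hr0 hr1).continuousOn
  have hfr : (∫ t in (0:ℝ)..(2*π),
        ((Complex.exp (t*Complex.I) + (r:ℂ))/(Complex.exp (t*Complex.I) - (r:ℂ))).re * u t)
      = ∫ t in (0:ℝ)..(2*π), Pk r t * u t :=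
    intervalIntegral.integral_congr (fun t _ => by rw [re_eq hr0 hr1])
  have hPspl : ∀ c d e : ℝ, (∫ t in c..d, Pk r t) + ∫ t in d..e, Pk r t = ∫ t in c..e, Pk r t :=
    fun c d e => integral_add_adjacent_intervals
      ((Pk_cont hr0 hr1).intervalIntegrable _ _) ((Pk_cont hr0 hr1).intervalIntegrable _ _)
  have hPπ : (∫ t in (0:ℝ)..π, Pk r t) = π := by
    rw [integral_Pk hr0 hr1, Fk_pi, Fk_zero]; ring
  have hP2π : (∫ t in π..(2*π), Pk r t) = π := by
    rw [integral_Pk hr0 hr1, Fk_two_pi, Fk_pi]; ring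
  have hPδ : (∫ t in (0:ℝ)..δ, Pk r t) ≤ π := by
    have h := hPspl 0 δ π
    have h2' : 0 ≤ ∫ t in δ..π, Pk r t :=
      intervalIntegral.integral_nonneg (by linarith) (fun t _ => Pk_nonneg hr0 hr1 t)
    rw [hPπ] at h; linarith
  have hPδ' : (∫ t in (2*π - δ)..(2*π), Pk r t) ≤ π := by
    have h := hPspl π (2*π - δ) (2*π)
    have h2' : 0 ≤ ∫ t in π..(2*π - δ), Pk r t :=
      intervalIntegral.integral_nonneg (by linarith) (fun t _ => Pk_nonneg hr0 hr1 t)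
    rw [hP2π] at h; linarith
  have hPδ0 : 0 ≤ ∫ t in (0:ℝ)..δ, Pk r t :=
    intervalIntegral.integral_nonneg hδ0.le (fun t _ => Pk_nonneg hr0 hr1 t)
  have hPδ0' : 0 ≤ ∫ t in (2*π - δ)..(2*π), Pk r t :=
    intervalIntegral.integral_nonneg (by linarith) (fun t _ => Pk_nonneg hr0 hr1 t)
  -- piece 1 : small interval near 0
  have hb1 : |∫ t in (0:ℝ)..δ, Pk r t * (u t - up)| ≤ ε/2 * π := by
    have hg : IntervalIntegrable (fun t => ε/2 * Pk r t) volume 0 δ :=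
      (continuous_const.mul (Pk_cont hr0 hr1)).intervalIntegrable _ _
    have hae : ∀ᵐ t ∂volume.restrict (Ι (0:ℝ) δ), ‖Pk r t * (u t - up)‖ ≤ ε/2 * Pk r t := by
      rw [uIoc_of_le hδ0.le]
      refine (ae_restrict_iff' measurableSet_Ioc).2 (ae_of_all _ fun t ht => ?_)
      have h1t := h1 t ht.1 (lt_of_le_of_lt ht.2 hδ1)
      rw [Real.norm_eq_abs, abs_mul, abs_of_nonneg (Pk_nonneg hr0 hr1 t)]
      calc Pk r t * |u t - up| ≤ Pk r t * (ε/2) :=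
            mul_le_mul_of_nonneg_left h1t (Pk_nonneg hr0 hr1 t)
        _ = ε/2 * Pk r t := mul_comm _ _
    have h := intervalIntegral.norm_integral_le_of_norm_le hδ0.le
      (by rw [← uIoc_of_le hδ0.le]; exact (ae_restrict_iff' measurableSet_uIoc).1 hae) hg
    rw [Real.norm_eq_abs] at h
    refine h.trans ?_
    rw [intervalIntegral.integral_const_mul]
    have := mul_le_mul_of_nonneg_left hPδ (by positivity : (0:ℝ) ≤ ε/2)
    linarith
  -- piece 4 : small interval near 2π
  have hb4 : |∫ t in (2*π - δ)..(2*π), Pk r t * (u t - um)| ≤ ε/2 * π := by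
    have hg : IntervalIntegrable (fun t => ε/2 * Pk r t) volume (2*π - δ) (2*π) :=
      (continuous_const.mul (Pk_cont hr0 hr1)).intervalIntegrable _ _
    have hae : ∀ᵐ t ∂volume.restrict (Ι (2*π - δ) (2*π)), ‖Pk r t * (u t - um)‖ ≤ ε/2 * Pk r t := by
      rw [uIoc_of_le (by linarith), ← Measure.restrict_congr_set Ioo_ae_eq_Ioc]
      refine (ae_restrict_iff' measurableSet_Ioo).2 (ae_of_all _ fun t ht => ?_)
      have h2t := h2 t (by linarith [ht.1]) ht.2
      rw [Real.norm_eq_abs, abs_mul, abs_of_nonneg (Pk_nonneg hr0 hr1 t)]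
      calc Pk r t * |u t - um| ≤ Pk r t * (ε/2) :=
            mul_le_mul_of_nonneg_left h2t (Pk_nonneg hr0 hr1 t)
        _ = ε/2 * Pk r t := mul_comm _ _
    have h := intervalIntegral.norm_integral_le_of_norm_le (by linarith)
      (by rw [← uIoc_of_le (by linarith)]; exact (ae_restrict_iff' measurableSet_uIoc).1 hae) hg
    rw [Real.norm_eq_abs] at h
    refine h.trans ?_
    rw [intervalIntegral.integral_const_mul]
    have := mul_le_mul_of_nonneg_left hPδ' (by positivity : (0:ℝ) ≤ ε/2)
    linarith
  -- piece 2 : middle-left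
  have hb2 : |∫ t in δ..π, Pk r t * (u t - up)| ≤ Kr * (C * (2*π)) := by
    have hbd : ∀ t ∈ Ι δ π, ‖Pk r t * (u t - up)‖ ≤ Kr * C := by
      intro t ht
      rw [uIoc_of_le (by linarith)] at ht
      have htI : t ∈ Ioo 0 (2*π) := ⟨lt_trans hδ0 ht.1, by linarith [ht.2]⟩
      have hPle : Pk r t ≤ Kr := Pk_le hr0 hr1 (hcos t ht.1.le (by linarith [ht.2]))
      have hub : |u t - up| ≤ C := by
        have hB' := hB t htI
        have htr : |u t - up| ≤ |u t| + |up| := abs_sub _ _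
        have : (0:ℝ) ≤ |um| := abs_nonneg _
        rw [hC]; linarith
      rw [Real.norm_eq_abs, abs_mul, abs_of_nonneg (Pk_nonneg hr0 hr1 t)]
      exact mul_le_mul hPle hub (abs_nonneg _) hKr0
    have h := intervalIntegral.norm_integral_le_of_norm_le_const hbd
    rw [Real.norm_eq_abs] at h
    refine h.trans ?_
    rw [abs_of_nonneg (by linarith : (0:ℝ) ≤ π - δ)]
    nlinarith [mul_nonneg hKr0 hC0, hδ0.le, hπ]
  -- piece 3 : middle-right
  have hb3 : |∫ t in π..(2*π - δ), Pk r t * (u t - um)| ≤ Kr * (C * (2*π)) := by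
    have hbd : ∀ t ∈ Ι π (2*π - δ), ‖Pk r t * (u t - um)‖ ≤ Kr * C := by
      intro t ht
      rw [uIoc_of_le (by linarith)] at ht
      have htI : t ∈ Ioo 0 (2*π) := ⟨lt_trans hπ ht.1, by linarith [ht.2, hδ0]⟩
      have hPle : Pk r t ≤ Kr := Pk_le hr0 hr1 (hcos t (by linarith [ht.1]) ht.2)
      have hub : |u t - um| ≤ C := by
        have hB' := hB t htI
        have htr : |u t - um| ≤ |u t| + |um| := abs_sub _ _
        have : (0:ℝ) ≤ |up| := abs_nonneg _
        rw [hC]; linarith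
      rw [Real.norm_eq_abs, abs_mul, abs_of_nonneg (Pk_nonneg hr0 hr1 t)]
      exact mul_le_mul hPle hub (abs_nonneg _) hKr0
    have h := intervalIntegral.norm_integral_le_of_norm_le_const hbd
    rw [Real.norm_eq_abs] at h
    refine h.trans ?_
    rw [abs_of_nonneg (by linarith : (0:ℝ) ≤ 2*π - δ - π)]
    nlinarith [mul_nonneg hKr0 hC0, hδ0.le, hπ]
  -- decompositions
  have hsplA : (∫ t in (0:ℝ)..π, Pk r t * (u t - up))
      = (∫ t in (0:ℝ)..δ, Pk r t * (u t - up)) + ∫ t in δ..π, Pk r t * (u t - up) :=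
    (integral_add_adjacent_intervals
      (hPdI up 0 δ (le_refl 0) (by linarith) hδ0.le (by linarith))
      (hPdI up δ π hδ0.le (by linarith) (by linarith) (by linarith))).symm
  have hsplB : (∫ t in π..(2*π), Pk r t * (u t - um))
      = (∫ t in π..(2*π - δ), Pk r t * (u t - um)) + ∫ t in (2*π - δ)..(2*π), Pk r t * (u t - um) :=
    (integral_add_adjacent_intervals
      (hPdI um π (2*π - δ) (by linarith) (by linarith) (by linarith) (by linarith))
      (hPdI um (2*π - δ) (2*π) (by linarith) (by linarith) (by linarith) (le_refl _))).symm
  have hAeq : (∫ t in (0:ℝ)..π, Pk r t * (u t - up))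
      = (∫ t in (0:ℝ)..π, Pk r t * u t) - π * up := by
    calc (∫ t in (0:ℝ)..π, Pk r t * (u t - up))
        = ∫ t in (0:ℝ)..π, (Pk r t * u t - Pk r t * up) :=
          intervalIntegral.integral_congr fun t _ => by ring
      _ = (∫ t in (0:ℝ)..π, Pk r t * u t) - ∫ t in (0:ℝ)..π, Pk r t * up :=
          intervalIntegral.integral_sub
            (hPuI 0 π (le_refl 0) (by linarith) (by linarith) (by linarith))
            (((Pk_cont hr0 hr1).mul continuous_const).intervalIntegrable _ _)
      _ = (∫ t in (0:ℝ)..π, Pk r t * u t) - π * up := by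
          rw [intervalIntegral.integral_mul_const, hPπ]
  have hBeq : (∫ t in π..(2*π), Pk r t * (u t - um))
      = (∫ t in π..(2*π), Pk r t * u t) - π * um := by
    calc (∫ t in π..(2*π), Pk r t * (u t - um))
        = ∫ t in π..(2*π), (Pk r t * u t - Pk r t * um) :=
          intervalIntegral.integral_congr fun t _ => by ring
      _ = (∫ t in π..(2*π), Pk r t * u t) - ∫ t in π..(2*π), Pk r t * um :=
          intervalIntegral.integral_sub
            (hPuI π (2*π) (by linarith) (by linarith) (by linarith) (le_refl _))
            (((Pk_cont hr0 hr1).mul continuous_const).intervalIntegrable _ _)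
      _ = (∫ t in π..(2*π), Pk r t * u t) - π * um := by
          rw [intervalIntegral.integral_mul_const, hP2π]
  have htot : (∫ t in (0:ℝ)..(2*π), Pk r t * u t)
      = (∫ t in (0:ℝ)..π, Pk r t * u t) + ∫ t in π..(2*π), Pk r t * u t :=
    (integral_add_adjacent_intervals
      (hPuI 0 π (le_refl 0) (by linarith) (by linarith) (by linarith))
      (hPuI π (2*π) (by linarith) (by linarith) (by linarith) (le_refl _))).symm
  rw [Real.dist_eq, hfr]
  have hGsub : (2*π)⁻¹ * (∫ t in (0:ℝ)..(2*π), Pk r t * u t) - (um+up)/2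
      = (2*π)⁻¹ * (((∫ t in (0:ℝ)..δ, Pk r t * (u t - up)) + ∫ t in δ..π, Pk r t * (u t - up))
        + ((∫ t in π..(2*π - δ), Pk r t * (u t - um))
          + ∫ t in (2*π - δ)..(2*π), Pk r t * (u t - um))) := by
    rw [← hsplA, ← hsplB, hAeq, hBeq, htot]
    field_simp
    ring
  rw [hGsub, abs_mul, abs_of_nonneg (by positivity : (0:ℝ) ≤ (2*π)⁻¹)]
  have habs : |((∫ t in (0:ℝ)..δ, Pk r t * (u t - up)) + ∫ t in δ..π, Pk r t * (u t - up))
        + ((∫ t in π..(2*π - δ), Pk r t * (u t - um))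
          + ∫ t in (2*π - δ)..(2*π), Pk r t * (u t - um))| < 2*π*ε := by
    have t1 := abs_add_le ((∫ t in (0:ℝ)..δ, Pk r t * (u t - up)) + ∫ t in δ..π, Pk r t * (u t - up))
      ((∫ t in π..(2*π - δ), Pk r t * (u t - um)) + ∫ t in (2*π - δ)..(2*π), Pk r t * (u t - um))
    have t2 := abs_add_le (∫ t in (0:ℝ)..δ, Pk r t * (u t - up)) (∫ t in δ..π, Pk r t * (u t - up))
    have t3 := abs_add_le (∫ t in π..(2*π - δ), Pk r t * (u t - um))
      (∫ t in (2*π - δ)..(2*π), Pk r t * (u t - um))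
    have s1 := t1.trans (add_le_add t2 t3)
    have s2 := add_le_add (add_le_add hb1 hb2) (add_le_add hb3 hb4)
    have s3 := s1.trans s2
    linarith [s3, hsm]
  calc (2*π)⁻¹ * |((∫ t in (0:ℝ)..δ, Pk r t * (u t - up)) + ∫ t in δ..π, Pk r t * (u t - up))
        + ((∫ t in π..(2*π - δ), Pk r t * (u t - um))
          + ∫ t in (2*π - δ)..(2*π), Pk r t * (u t - um))|
      < (2*π)⁻¹ * (2*π*ε) := by
        exact mul_lt_mul_of_pos_left habs (by positivity)
    _ = ε := by field_simp
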